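/- For every x₀ ∈ S the limit x_c := lim_{t→∞} φ(x₀,t) exists; moreover, for every sequence (x_n) in S with x_n → x₀ and every sequence (t_n) in [0,∞) with t_n → ∞, one has φ(x_n, t_n) → x_c. Consequently, the extension of the negative gradient flow to S × [0,∞] obtained by sending (x,∞) to lim_{t→∞} φ(x,t) is continuous. -/

import Mathlib

open Set Filter

noncomputable section

section helpers
variable {E : Type*} [NormedAddCommGroup E] [InnerProductSpace ℝ E] [CompleteSpace E]
  (f : E → ℝ) (φ : E → ℝ → E) (fc : ℝ)

lemma uderiv (hf : ContDiff ℝ 1 f)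
    (hφflow : ∀ x, ∀ t : ℝ, 0 ≤ t →
      HasDerivWithinAt (φ x) (-(gradient f (φ x t))) (Set.Ici 0) t)
    (x : E) (t : ℝ) (ht : 0 ≤ t) :
    HasDerivWithinAt (fun s => f (φ x s) - fc) (-(‖gradient f (φ x t)‖^2)) (Set.Ici 0) t := by
  have hd : DifferentiableAt ℝ f (φ x t) := (hf.differentiable one_ne_zero).differentiableAt
  have hg := hd.hasGradientAt
  have h2 := hg.hasFDerivAt.comp_hasDerivWithinAt t (hφflow x t ht)
  have h3 : (InnerProductSpace.toDual ℝ E (gradient f (φ x t))) (-(gradient f (φ x t)))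
      = -(‖gradient f (φ x t)‖^2) := by
    rw [InnerProductSpace.toDual_apply_apply, inner_neg_right, real_inner_self_eq_norm_sq]
  rw [h3] at h2
  exact h2.sub_const fc

lemma coreA (hf : ContDiff ℝ 1 f)
    (hφflow : ∀ x, ∀ t : ℝ, 0 ≤ t →
      HasDerivWithinAt (φ x) (-(gradient f (φ x t))) (Set.Ici 0) t)
    (k ε : ℝ) (hk : 0 < k)
    (hloj : ∀ x : E, |f x - fc| < ε → ‖gradient f x‖ ≥ k * |f x - fc| ^ ((3:ℝ)/4))
    (x : E) (s b : ℝ) (hs : 0 ≤ s) (hsb : s ≤ b)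
    (hpos : ∀ t ∈ Ico s b, 0 < f (φ x t) - fc)
    (heps : ∀ t ∈ Ico s b, f (φ x t) - fc < ε) :
    ‖φ x b - φ x s‖ ≤
      (4/k) * ((f (φ x s) - fc) ^ ((1:ℝ)/4) - (f (φ x b) - fc) ^ ((1:ℝ)/4)) := by
  set u : ℝ → ℝ := fun τ => f (φ x τ) - fc with hu
  have hu' : ∀ t : ℝ, 0 ≤ t → HasDerivWithinAt u (-(‖gradient f (φ x t)‖^2)) (Ici 0) t :=
    uderiv f φ fc hf hφflow x
  set g : ℝ → E := fun τ => φ x τ - φ x s with hgdef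
  set B : ℝ → ℝ := fun τ => (4/k) * (u s ^ ((1:ℝ)/4) - u τ ^ ((1:ℝ)/4)) with hBdef
  set B' : ℝ → ℝ :=
    fun τ => (4/k) * -(-(‖gradient f (φ x τ)‖^2) * ((1:ℝ)/4) * u τ ^ ((1:ℝ)/4 - 1)) with hB'def
  have hIcc : Icc s b ⊆ Ici 0 := fun τ hτ => hs.trans hτ.1
  have hgcont : ContinuousOn g (Icc s b) := fun τ hτ =>
    (((hφflow x τ (hIcc hτ)).continuousWithinAt).mono hIcc).sub continuousWithinAt_const
  have hg' : ∀ t ∈ Ico s b, HasDerivWithinAt g (-(gradient f (φ x t))) (Ici t) t := by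
    intro t ht
    have ht0 : 0 ≤ t := hs.trans ht.1
    exact ((hφflow x t ht0).mono (Ici_subset_Ici.2 ht0)).sub_const _
  have hucont : ContinuousOn u (Icc s b) := fun τ hτ =>
    ((hu' τ (hIcc hτ)).continuousWithinAt).mono hIcc
  have hBcont : ContinuousOn B (Icc s b) := by
    apply continuousOn_const.mul
    apply continuousOn_const.sub
    intro τ hτ
    exact (Real.continuousAt_rpow_const (u τ) _ (Or.inr (by norm_num))).comp_continuousWithinAt
      (hucont τ hτ)
  have hB' : ∀ t ∈ Ico s b, HasDerivWithinAt B (B' t) (Ici t) t := by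
    intro t ht
    have ht0 : 0 ≤ t := hs.trans ht.1
    have h1 := ((hu' t ht0).mono (Ici_subset_Ici.2 ht0)).rpow_const (p := (1:ℝ)/4)
      (Or.inl (ne_of_gt (hpos t ht)))
    exact (h1.const_sub _).const_mul _
  have bound : ∀ t ∈ Ico s b, ‖-(gradient f (φ x t))‖ ≤ B' t := by
    intro t ht
    set G := ‖gradient f (φ x t)‖ with hGdef
    have hut : 0 < u t := hpos t ht
    have hlo : G ≥ k * u t ^ ((3:ℝ)/4) := by
      have := hloj (φ x t) (by rw [abs_of_pos hut]; exact heps t ht)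
      rwa [abs_of_pos hut] at this
    set P := u t ^ ((3:ℝ)/4) with hPdef
    have hP : 0 < P := Real.rpow_pos_of_pos hut _
    have hre : u t ^ ((1:ℝ)/4 - 1) = P⁻¹ := by
      rw [show ((1:ℝ)/4 - 1) = -((3:ℝ)/4) by norm_num, Real.rpow_neg hut.le]
    have hG0 : 0 ≤ G := norm_nonneg _
    rw [norm_neg]
    show G ≤ B' t
    have h4 : B' t = G^2 / (k * P) := by
      rw [hB'def]; simp only; rw [hre]; field_simp; ring
    rw [h4, le_div_iff₀ (by positivity)]
    nlinarith [hlo, hG0, hP, hk]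
  have ha : ‖g s‖ ≤ B s := by simp [hgdef, hBdef]
  have := image_norm_le_of_norm_deriv_right_le_deriv_boundary' hgcont hg' ha hBcont hB' bound
    (right_mem_Icc.2 hsb)
  simpa [hgdef, hBdef] using this

end helpers


section helpers2
variable {E : Type*} [NormedAddCommGroup E] [InnerProductSpace ℝ E] [CompleteSpace E]
  {f : E → ℝ} {φ : E → ℝ → E} {fc : ℝ}

lemma uderiv' (hf : ContDiff ℝ 1 f)
    (hφflow : ∀ x, ∀ t : ℝ, 0 ≤ t →
      HasDerivWithinAt (φ x) (-(gradient f (φ x t))) (Set.Ici 0) t)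
    (x : E) (t : ℝ) (ht : 0 ≤ t) :
    HasDerivWithinAt (fun s => f (φ x s) - fc) (-(‖gradient f (φ x t)‖^2)) (Set.Ici 0) t :=
  uderiv f φ fc hf hφflow x t ht

lemma uanti (hf : ContDiff ℝ 1 f)
    (hφflow : ∀ x, ∀ t : ℝ, 0 ≤ t →
      HasDerivWithinAt (φ x) (-(gradient f (φ x t))) (Set.Ici 0) t)
    (x : E) : AntitoneOn (fun t => f (φ x t) - fc) (Ici 0) := by
  apply antitoneOn_of_hasDerivWithinAt_nonpos (convex_Ici 0)
    (f' := fun t => -(‖gradient f (φ x t)‖^2))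
    (fun t ht => (uderiv' hf hφflow x t ht).continuousWithinAt)
  · intro t ht
    rw [interior_Ici] at ht ⊢
    exact (uderiv' hf hφflow x t ht.le).mono Ioi_subset_Ici_self
  · intro t _
    simp [neg_nonpos, sq_nonneg]

lemma unonneg (hf : ContDiff ℝ 1 f)
    (hφflow : ∀ x, ∀ t : ℝ, 0 ≤ t →
      HasDerivWithinAt (φ x) (-(gradient f (φ x t))) (Set.Ici 0) t)
    (x : E) (hxS : Tendsto (fun t => f (φ x t)) atTop (nhds fc))
    (t : ℝ) (ht : 0 ≤ t) : 0 ≤ f (φ x t) - fc := by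
  have htend : Tendsto (fun τ => f (φ x τ) - fc) atTop (nhds 0) := by
    simpa using hxS.sub_const fc
  refine le_of_tendsto htend ?_
  filter_upwards [eventually_ge_atTop t] with τ hτ
  exact uanti hf hφflow x ht (ht.trans hτ) hτ

lemma coreA' (hf : ContDiff ℝ 1 f)
    (hφflow : ∀ x, ∀ t : ℝ, 0 ≤ t →
      HasDerivWithinAt (φ x) (-(gradient f (φ x t))) (Set.Ici 0) t)
    (k ε : ℝ) (hk : 0 < k)
    (hloj : ∀ x : E, |f x - fc| < ε → ‖gradient f x‖ ≥ k * |f x - fc| ^ ((3:ℝ)/4))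
    (x : E) (s b : ℝ) (hs : 0 ≤ s) (hsb : s ≤ b)
    (hpos : ∀ t ∈ Ico s b, 0 < f (φ x t) - fc)
    (heps : ∀ t ∈ Ico s b, f (φ x t) - fc < ε) :
    ‖φ x b - φ x s‖ ≤
      (4/k) * ((f (φ x s) - fc) ^ ((1:ℝ)/4) - (f (φ x b) - fc) ^ ((1:ℝ)/4)) :=
  coreA f φ fc hf hφflow k ε hk hloj x s b hs hsb hpos heps

lemma coreB (hf : ContDiff ℝ 1 f)
    (hφflow : ∀ x, ∀ t : ℝ, 0 ≤ t →
      HasDerivWithinAt (φ x) (-(gradient f (φ x t))) (Set.Ici 0) t)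
    (k ε : ℝ) (hk : 0 < k)
    (hloj : ∀ x : E, |f x - fc| < ε → ‖gradient f x‖ ≥ k * |f x - fc| ^ ((3:ℝ)/4))
    (x : E) (hxS : Tendsto (fun t => f (φ x t)) atTop (nhds fc))
    (s b : ℝ) (hs : 0 ≤ s) (hsb : s ≤ b) (hus : f (φ x s) - fc < ε) :
    ‖φ x b - φ x s‖ ≤ (4/k) * (f (φ x s) - fc) ^ ((1:ℝ)/4) := by
  set u : ℝ → ℝ := fun τ => f (φ x τ) - fc with hudef
  have hanti : AntitoneOn u (Ici 0) := uanti hf hφflow x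
  have hnn : ∀ t : ℝ, 0 ≤ t → 0 ≤ u t := unonneg hf hφflow x hxS
  have heps : ∀ t ∈ Ico s b, u t < ε := fun t ht =>
    lt_of_le_of_lt (hanti hs (hs.trans ht.1) ht.1) hus
  have hus0 : 0 ≤ u s := hnn s hs
  have hk4 : 0 ≤ 4/k := by positivity
  have hrnn : 0 ≤ u s ^ ((1:ℝ)/4) := Real.rpow_nonneg hus0 _
  by_cases hZ : ∃ t₁ ∈ Icc s b, u t₁ = 0
  · set Z : Set ℝ := Icc s b ∩ u ⁻¹' {0} with hZdef
    have hucont : ContinuousOn u (Icc s b) := fun τ hτ =>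
      ((uderiv' hf hφflow x τ (hs.trans hτ.1)).continuousWithinAt).mono
        (fun τ' hτ' => hs.trans hτ'.1)
    have hZclosed : IsClosed Z :=
      hucont.preimage_isClosed_of_isClosed isClosed_Icc isClosed_singleton
    have hZne : Z.Nonempty := by
      obtain ⟨t₁, ht₁, hz⟩ := hZ; exact ⟨t₁, ht₁, by simpa using hz⟩
    have hZbdd : BddBelow Z := ⟨s, fun τ hτ => hτ.1.1⟩
    set t₀ := sInf Z with ht₀def
    have ht₀Z : t₀ ∈ Z := hZclosed.csInf_mem hZne hZbdd
    have hst₀ : s ≤ t₀ := ht₀Z.1.1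
    have ht₀b : t₀ ≤ b := ht₀Z.1.2
    have hut₀ : u t₀ = 0 := by simpa using ht₀Z.2
    have ht₀0 : 0 ≤ t₀ := hs.trans hst₀
    -- on [s, t₀], u > 0
    have hpos1 : ∀ t ∈ Ico s t₀, 0 < u t := by
      intro t ht
      rcases (hnn t (hs.trans ht.1)).lt_or_eq with h | h
      · exact h
      · exfalso
        have : t ∈ Z := ⟨⟨ht.1, ht.2.le.trans ht₀b⟩, by simp [← h]⟩
        exact absurd (csInf_le hZbdd this) (not_le.2 ht.2)
    have part1 : ‖φ x t₀ - φ x s‖ ≤ (4/k) * (u s ^ ((1:ℝ)/4) - u t₀ ^ ((1:ℝ)/4)) :=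
      coreA' hf hφflow k ε hk hloj x s t₀ hs hst₀ hpos1
        (fun t ht => heps t ⟨ht.1, lt_of_lt_of_le ht.2 ht₀b⟩)
    -- u vanishes identically on [t₀, ∞), so the gradient vanishes there
    have huzero : ∀ t : ℝ, t₀ ≤ t → u t = 0 :=
      fun t ht => le_antisymm (hut₀ ▸ hanti ht₀0 (ht₀0.trans ht) ht) (hnn t (ht₀0.trans ht))
    have hgz : ∀ t ∈ Ico t₀ b, gradient f (φ x t) = 0 := by
      intro t ht
      have ht0 : 0 ≤ t := ht₀0.trans ht.1
      have h1 : HasDerivWithinAt u (-(‖gradient f (φ x t)‖^2)) (Ici t) t :=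
        (uderiv' hf hφflow x t ht0).mono (Ici_subset_Ici.2 ht0)
      have h2 : HasDerivWithinAt u 0 (Ici t) t :=
        (hasDerivWithinAt_const t (Ici t) (0:ℝ)).congr
          (fun τ hτ => huzero τ (ht.1.trans hτ)) (huzero t ht.1)
      have huniq := h1.derivWithin (uniqueDiffOn_Ici t t self_mem_Ici)
      rw [h2.derivWithin (uniqueDiffOn_Ici t t self_mem_Ici)] at huniq
      have : ‖gradient f (φ x t)‖ = 0 := by nlinarith [norm_nonneg (gradient f (φ x t))]
      simpa using this
    have part2 : ‖φ x b - φ x t₀‖ ≤ 0 := by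
      have := norm_image_sub_le_of_norm_deriv_right_le_segment
        (f := φ x) (f' := fun t => -(gradient f (φ x t))) (a := t₀) (b := b)
        (fun τ hτ => ((hφflow x τ (ht₀0.trans hτ.1)).continuousWithinAt).mono
          (fun τ' hτ' => ht₀0.trans hτ'.1))
        (fun τ hτ => (hφflow x τ (ht₀0.trans hτ.1)).mono (Ici_subset_Ici.2 (ht₀0.trans hτ.1)))
        (C := 0) (fun τ hτ => by simp [hgz τ hτ]) b (right_mem_Icc.2 ht₀b)
      simpa using this
    calc ‖φ x b - φ x s‖ ≤ ‖φ x b - φ x t₀‖ + ‖φ x t₀ - φ x s‖ := norm_sub_le_norm_sub_add_norm_sub _ _ _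
      _ ≤ 0 + (4/k) * (u s ^ ((1:ℝ)/4) - u t₀ ^ ((1:ℝ)/4)) := add_le_add part2 part1
      _ = (4/k) * u s ^ ((1:ℝ)/4) := by
          rw [hut₀, Real.zero_rpow (by norm_num), sub_zero, zero_add]
  · push_neg at hZ
    have hpos : ∀ t ∈ Ico s b, 0 < u t := fun t ht =>
      (hnn t (hs.trans ht.1)).lt_of_ne' (hZ t ⟨ht.1, ht.2.le⟩)
    have := coreA' hf hφflow k ε hk hloj x s b hs hsb hpos heps
    refine this.trans ?_
    have : 0 ≤ u b ^ ((1:ℝ)/4) := Real.rpow_nonneg (hnn b (hs.trans hsb)) _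
    nlinarith
end helpers2


/-- Continuity of the extended negative gradient flow on the stable
set of a critical level satisfying a Łojasiewicz inequality with exponent 3/4: the flow
through any `x₀` in the stable set `S` converges to some `x_c`, and for any sequences
`x_n → x₀` in `S` and `t_n → ∞` one has `φ(x_n, t_n) → x_c`. -/
theorem stmt14 {E : Type*} [NormedAddCommGroup E] [InnerProductSpace ℝ E]
    [FiniteDimensional ℝ E]
    (f : E → ℝ) (hf : ContDiff ℝ 1 f)
    (φ : E → ℝ → E)
    (hφcont : ContinuousOn (fun q : E × ℝ => φ q.1 q.2) (Set.univ ×ˢ Set.Ici (0:ℝ)))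
    (hφ0 : ∀ x, φ x 0 = x)
    (hφflow : ∀ x, ∀ t : ℝ, 0 ≤ t →
      HasDerivWithinAt (φ x) (-(gradient f (φ x t))) (Set.Ici 0) t)
    (fc : ℝ) (k ε : ℝ) (hk : 0 < k) (hε : 0 < ε)
    (hloj : ∀ x : E, |f x - fc| < ε → ‖gradient f x‖ ≥ k * |f x - fc| ^ ((3:ℝ)/4))
    (S : Set E)
    (hS : S = {x : E | Filter.Tendsto (fun t => f (φ x t)) Filter.atTop (nhds fc)})
    (x₀ : E) (hx₀ : x₀ ∈ S) :
    ∃ xc : E, Filter.Tendsto (fun t => φ x₀ t) Filter.atTop (nhds xc) ∧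
      ∀ (xn : ℕ → E) (tn : ℕ → ℝ), (∀ m, xn m ∈ S) → (∀ m, 0 ≤ tn m) →
        Filter.Tendsto xn Filter.atTop (nhds x₀) →
        Filter.Tendsto tn Filter.atTop Filter.atTop →
        Filter.Tendsto (fun m => φ (xn m) (tn m)) Filter.atTop (nhds xc) := by
  have hx₀' : Tendsto (fun t => f (φ x₀ t)) atTop (nhds fc) := by rw [hS] at hx₀; exact hx₀
  set u₀ : ℝ → ℝ := fun t => f (φ x₀ t) - fc with hu₀def
  have htend0 : Tendsto u₀ atTop (nhds 0) := by simpa using hx₀'.sub_const fc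
  have hq : Tendsto (fun t => (4/k) * u₀ t ^ ((1:ℝ)/4)) atTop (nhds 0) := by
    have hc : ContinuousAt (fun y : ℝ => y ^ ((1:ℝ)/4)) 0 :=
      Real.continuousAt_rpow_const 0 _ (Or.inr (by norm_num))
    have h14 := hc.tendsto.comp htend0
    rw [Real.zero_rpow (by norm_num)] at h14
    simpa using h14.const_mul (4/k)
  have hcauchy : CauchySeq (fun t : ℝ => φ x₀ t) := by
    rw [Metric.cauchySeq_iff']
    intro δ hδ
    have hev : ∀ᶠ N in atTop,
        ((4/k) * u₀ N ^ ((1:ℝ)/4) < δ ∧ u₀ N < ε) ∧ (0:ℝ) ≤ N :=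
      ((hq.eventually_lt_const hδ).and (htend0.eventually_lt_const hε)).and
        (eventually_ge_atTop 0)
    obtain ⟨N, ⟨h1, h2⟩, h3⟩ := hev.exists
    refine ⟨N, fun n hn => ?_⟩
    rw [dist_eq_norm]
    exact lt_of_le_of_lt (coreB hf hφflow k ε hk hloj x₀ hx₀' N n h3 hn h2) h1
  obtain ⟨xc, hxc⟩ := cauchySeq_tendsto_of_complete hcauchy
  refine ⟨xc, hxc, ?_⟩
  intro xn tn hxnS htn0 hxn htn
  rw [Metric.tendsto_nhds]
  intro δ hδ
  set η := min ε ((k*δ/12)^(4:ℕ)) with hηdef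
  have hη : 0 < η := lt_min hε (by positivity)
  have hevT : ∀ᶠ T in atTop, (dist (φ x₀ T) xc < δ/3 ∧ u₀ T < η/2) ∧ (0:ℝ) ≤ T :=
    ((Metric.tendsto_nhds.mp hxc (δ/3) (by positivity)).and
      (htend0.eventually_lt_const (by positivity))).and (eventually_ge_atTop 0)
  obtain ⟨T, ⟨hT1, hT2⟩, hT3⟩ := hevT.exists
  have hev1 : Tendsto (fun m => φ (xn m) T) atTop (nhds (φ x₀ T)) := by
    have hmem : Tendsto (fun m => ((xn m, T) : E × ℝ)) atTop
        (nhdsWithin (x₀, T) (univ ×ˢ Ici (0:ℝ))) := by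
      rw [tendsto_nhdsWithin_iff]
      exact ⟨hxn.prodMk_nhds tendsto_const_nhds,
        Eventually.of_forall fun m => ⟨mem_univ _, hT3⟩⟩
    exact (hφcont (x₀, T) ⟨mem_univ _, hT3⟩).tendsto.comp hmem
  have hev2 : Tendsto (fun m => f (φ (xn m) T)) atTop (nhds (f (φ x₀ T))) :=
    (hf.continuous.tendsto _).comp hev1
  filter_upwards [Metric.tendsto_nhds.mp hev1 (δ/3) (by positivity),
    hev2.eventually_lt_const (show f (φ x₀ T) < fc + η by
      have := hT2; simp only [hu₀def] at this; linarith),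
    htn.eventually_ge_atTop T] with m hm1 hm2 hm3
  have hxnm : Tendsto (fun t => f (φ (xn m) t)) atTop (nhds fc) := by
    have := hxnS m; rw [hS] at this; exact this
  have humT : f (φ (xn m) T) - fc < η := by linarith
  have humT' : f (φ (xn m) T) - fc < ε := lt_of_lt_of_le humT (min_le_left _ _)
  have hB := coreB hf hφflow k ε hk hloj (xn m) hxnm T (tn m) hT3 hm3 humT'
  have hnn : 0 ≤ f (φ (xn m) T) - fc := unonneg hf hφflow (xn m) hxnm T hT3
  have hstep : (4/k) * (f (φ (xn m) T) - fc) ^ ((1:ℝ)/4) < δ/3 := by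
    have h5 : (f (φ (xn m) T) - fc) ^ ((1:ℝ)/4) < (((k*δ/12)^(4:ℕ) : ℝ)) ^ ((1:ℝ)/4) :=
      Real.rpow_lt_rpow hnn (lt_of_lt_of_le humT (min_le_right _ _)) (by norm_num)
    have h6 : (((k*δ/12)^(4:ℕ) : ℝ)) ^ ((1:ℝ)/4) = k*δ/12 := by
      rw [← Real.rpow_natCast (k*δ/12) 4, ← Real.rpow_mul (by positivity)]
      norm_num
    rw [h6] at h5
    calc (4/k) * (f (φ (xn m) T) - fc) ^ ((1:ℝ)/4) < (4/k) * (k*δ/12) :=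
          mul_lt_mul_of_pos_left h5 (by positivity)
      _ = δ/3 := by field_simp; ring
  have htri : dist (φ (xn m) (tn m)) xc ≤
      ‖φ (xn m) (tn m) - φ (xn m) T‖ + ‖φ (xn m) T - φ x₀ T‖ + dist (φ x₀ T) xc := by
    rw [dist_eq_norm, dist_eq_norm]
    calc ‖φ (xn m) (tn m) - xc‖ ≤ ‖φ (xn m) (tn m) - φ x₀ T‖ + ‖φ x₀ T - xc‖ :=
          norm_sub_le_norm_sub_add_norm_sub _ _ _
      _ ≤ (‖φ (xn m) (tn m) - φ (xn m) T‖ + ‖φ (xn m) T - φ x₀ T‖) + ‖φ x₀ T - xc‖ := by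
          gcongr; exact norm_sub_le_norm_sub_add_norm_sub _ _ _
  have hm1' : ‖φ (xn m) T - φ x₀ T‖ < δ/3 := by rwa [dist_eq_norm] at hm1
  linarith
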